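/- arXiv:1010.4370 — 2 statements merged into one kernel-verified Lean document; each statement's English description precedes it below -/
import Mathlib

section
/- For an invertible complex n×n matrix Z+iI and Z'+iI invertible, with Cayley transform C(Z) = (Z-iI)(Z+iI)^{-1}, one has I - C(Z)·conj(C(Z')) = ((Z+iI)/(2i))^{-1} · ((Z - conj(Z'))/(2i)) · conj(((Z'+iI)/(2i)))^{-1}, where conj denotes entrywise complex conjugation. -/
open Matrix

/-- The Cayley transform `C(Z) = (Z - iI)(Z + iI)⁻¹`. -/
noncomputable def cayley {n : ℕ} (Z : Matrix (Fin n) (Fin n) ℂ) : Matrix (Fin n) (Fin n) ℂ :=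
  (Z - Complex.I • 1) * (Z + Complex.I • 1)⁻¹

theorem cayley_identity (n : ℕ) (Z Z' : Matrix (Fin n) (Fin n) ℂ)
    (hZ : IsUnit (Z + Complex.I • 1)) (hZ' : IsUnit (Z' + Complex.I • 1)) :
    (1 : Matrix (Fin n) (Fin n) ℂ) - cayley Z * (cayley Z').map (starRingEnd ℂ)
      = ((2 * Complex.I)⁻¹ • (Z + Complex.I • 1))⁻¹
        * ((2 * Complex.I)⁻¹ • (Z - Z'.map (starRingEnd ℂ)))
        * (((2 * Complex.I)⁻¹ • (Z' + Complex.I • 1)).map (starRingEnd ℂ))⁻¹ := by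
  set f := starRingEnd ℂ with hf
  set A := Z + Complex.I • (1 : Matrix (Fin n) (Fin n) ℂ) with hA
  set W := Z'.map f with hW
  set Bf := (Z' + Complex.I • (1 : Matrix (Fin n) (Fin n) ℂ)).map f with hBf
  have hdA : IsUnit A.det := (Matrix.isUnit_iff_isUnit_det _).mp hZ
  have hBu : IsUnit Bf := hZ'.map (f.mapMatrix)
  have hdB : IsUnit Bf.det := (Matrix.isUnit_iff_isUnit_det _).mp hBu
  have h2i : (2 * Complex.I) ≠ 0 := by simp [Complex.I_ne_zero]
  have hcne : (2 * Complex.I)⁻¹ ≠ 0 := inv_ne_zero h2i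
  have hBfW : Bf = W - Complex.I • (1 : Matrix (Fin n) (Fin n) ℂ) := by
    ext i j
    simp [hBf, hW, Matrix.map_apply, Matrix.one_apply, apply_ite f, hf, Complex.conj_I,
      sub_eq_add_neg]
    split_ifs <;> simp
  have hnum : (Z' - Complex.I • (1 : Matrix (Fin n) (Fin n) ℂ)).map f
      = W + Complex.I • 1 := by
    ext i j
    simp [hW, Matrix.map_apply, Matrix.one_apply, apply_ite f, hf, Complex.conj_I,
      sub_eq_add_neg]
    split_ifs <;> simp
  have hinv : ((Z' + Complex.I • (1 : Matrix (Fin n) (Fin n) ℂ))⁻¹).map f = Bf⁻¹ := by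
    refine (Matrix.inv_eq_right_inv ?_).symm
    rw [hBf, ← Matrix.map_mul, Matrix.mul_nonsing_inv _ ((Matrix.isUnit_iff_isUnit_det _).mp hZ')]
    exact Matrix.map_one f (map_zero f) (map_one f)
  have hcay' : (cayley Z').map f = (W + Complex.I • 1) * Bf⁻¹ := by
    rw [cayley, _root_.Matrix.map_mul, hinv, hnum]
  -- simplify the scalar-smul inverses on the RHS
  have hAA : A * A⁻¹ = 1 := Matrix.mul_nonsing_inv _ hdA
  have hBB : Bf⁻¹ * Bf = 1 := Matrix.nonsing_inv_mul _ hdB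
  have hBB' : Bf * Bf⁻¹ = 1 := Matrix.mul_nonsing_inv _ hdB
  have hs1 : ((2 * Complex.I)⁻¹ • A)⁻¹ = (2 * Complex.I) • A⁻¹ := by
    refine Matrix.inv_eq_right_inv ?_
    rw [Matrix.smul_mul, Matrix.mul_smul, smul_smul, inv_mul_cancel₀ h2i, one_smul, hAA]
  have hs2 : ((2 * Complex.I)⁻¹ • (Z' + Complex.I • (1 : Matrix (Fin n) (Fin n) ℂ))).map f
      = (f (2 * Complex.I))⁻¹ • Bf := by
    ext i j
    simp [hBf, Matrix.map_apply, _root_.map_mul, map_inv₀, hf, Complex.conj_I,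
      Complex.conj_ofNat, Matrix.one_apply, apply_ite (starRingEnd ℂ)]
    split_ifs <;> field_simp <;> ring_nf <;> simp [Complex.I_sq]
  have hfne : f (2 * Complex.I) ≠ 0 := by
    simp [hf, Complex.I_ne_zero]
  have hs3 : (((2 * Complex.I)⁻¹ • (Z' + Complex.I • (1 : Matrix (Fin n) (Fin n) ℂ))).map f)⁻¹
      = (f (2 * Complex.I)) • Bf⁻¹ := by
    rw [hs2]
    refine Matrix.inv_eq_right_inv ?_
    rw [Matrix.smul_mul, Matrix.mul_smul, smul_smul, inv_mul_cancel₀ hfne, one_smul, hBB']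
  rw [hs1, hs3, hcay']
  -- collect scalars on the RHS
  have hfI : f (2 * Complex.I) = -(2 * Complex.I) := by
    simp [hf, Complex.conj_I, Complex.conj_ofNat]
  have hRHS : (2 * Complex.I) • A⁻¹ * ((2 * Complex.I)⁻¹ • (Z - W))
      * ((f (2 * Complex.I)) • Bf⁻¹)
      = (-(2 * Complex.I)) • (A⁻¹ * (Z - W) * Bf⁻¹) := by
    rw [hfI]
    simp only [Matrix.smul_mul, Matrix.mul_smul, smul_smul, Matrix.mul_assoc]
    congr 1
    field_simp
  rw [hRHS]
  -- cancel A on the left and Bf on the right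
  apply hZ.mul_left_cancel
  apply hBu.mul_right_cancel
  show A * _ * Bf = A * _ * Bf
  have hcomm : A * (Z - Complex.I • 1) = (Z - Complex.I • 1) * A := by
    rw [hA]
    simp only [mul_sub, sub_mul, mul_add, add_mul, Matrix.smul_mul, Matrix.mul_smul,
      mul_one, one_mul]
    abel
  have hiA : A⁻¹ * A = 1 := Matrix.nonsing_inv_mul _ hdA
  have hc2 : (Z - Complex.I • 1) * A⁻¹ = A⁻¹ * (Z - Complex.I • 1) := by
    calc (Z - Complex.I • 1) * A⁻¹ = (A⁻¹ * A) * ((Z - Complex.I • 1) * A⁻¹) := by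
          rw [hiA, Matrix.one_mul]
      _ = A⁻¹ * ((A * (Z - Complex.I • 1)) * A⁻¹) := by simp only [Matrix.mul_assoc]
      _ = A⁻¹ * (((Z - Complex.I • 1) * A) * A⁻¹) := by rw [hcomm]
      _ = A⁻¹ * ((Z - Complex.I • 1) * (A * A⁻¹)) := by simp only [Matrix.mul_assoc]
      _ = A⁻¹ * (Z - Complex.I • 1) := by rw [hAA, Matrix.mul_one]
  have hL : A * (1 - cayley Z * ((W + Complex.I • 1) * Bf⁻¹)) * Bf
      = A * Bf - (Z - Complex.I • 1) * (W + Complex.I • 1) := by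
    rw [cayley, ← hA]
    rw [Matrix.mul_sub, Matrix.mul_one, Matrix.sub_mul]
    congr 1
    simp only [Matrix.mul_assoc]
    rw [hBB, Matrix.mul_one, ← Matrix.mul_assoc (Z - Complex.I • 1) A⁻¹, hc2,
      Matrix.mul_assoc A⁻¹, ← Matrix.mul_assoc A A⁻¹, hAA, Matrix.one_mul]
  have hR : A * ((-(2 * Complex.I)) • (A⁻¹ * (Z - W) * Bf⁻¹)) * Bf
      = (-(2 * Complex.I)) • (Z - W) := by
    rw [Matrix.mul_smul, Matrix.smul_mul]
    simp only [Matrix.mul_assoc]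
    rw [hBB, Matrix.mul_one, ← Matrix.mul_assoc A A⁻¹, hAA, Matrix.one_mul]
  rw [hL, hR, hA, hBfW]
  -- final algebraic identity
  simp only [mul_sub, sub_mul, mul_add, add_mul, Matrix.smul_mul, Matrix.mul_smul,
    mul_one, one_mul, smul_smul, smul_sub, smul_add, Complex.I_mul_I, neg_mul, neg_smul]
  module
end

section
/- Taking determinants in the Cayley identity: det(I - C(Z)·conj(C(Z'))) = det((Z - conj(Z'))/(2i)) / ( det((Z+iI)/(2i)) · conj(det((Z'+iI)/(2i))) ), whenever Z+iI and Z'+iI are invertible. -/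
open Matrix

theorem det_cayley_identity (n : ℕ) (Z Z' : Matrix (Fin n) (Fin n) ℂ)
    (hZ : IsUnit (Z + Complex.I • 1)) (hZ' : IsUnit (Z' + Complex.I • 1)) :
    ((1 : Matrix (Fin n) (Fin n) ℂ) - cayley Z * (cayley Z').map (starRingEnd ℂ)).det
      = ((2 * Complex.I)⁻¹ • (Z - Z'.map (starRingEnd ℂ))).det
        / (((2 * Complex.I)⁻¹ • (Z + Complex.I • 1)).det
            * (starRingEnd ℂ) (((2 * Complex.I)⁻¹ • (Z' + Complex.I • 1)).det)) := by
  set c : ℂ := Complex.I with hc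
  set A : Matrix (Fin n) (Fin n) ℂ := Z + c • 1 with hA
  set B : Matrix (Fin n) (Fin n) ℂ := Z - c • 1 with hB
  set W : Matrix (Fin n) (Fin n) ℂ := Z'.map (starRingEnd ℂ) with hW
  have hAdet : IsUnit A.det := (Matrix.isUnit_iff_isUnit_det A).mp hZ
  have hA'eq : (Z' + c • 1).map (starRingEnd ℂ) = W - c • 1 := by
    ext i j
    by_cases h : i = j <;>
      simp [Matrix.map_apply, Matrix.add_apply, Matrix.sub_apply, Matrix.smul_apply,
        Matrix.one_apply, h, hW, hc, Complex.conj_I, sub_eq_add_neg]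
  have hB'eq : (Z' - c • 1).map (starRingEnd ℂ) = W + c • 1 := by
    ext i j
    by_cases h : i = j <;>
      simp [Matrix.map_apply, Matrix.add_apply, Matrix.sub_apply, Matrix.smul_apply,
        Matrix.one_apply, h, hW, hc, Complex.conj_I, sub_eq_add_neg]
  set A' : Matrix (Fin n) (Fin n) ℂ := W - c • 1 with hA'
  have hA'det : IsUnit A'.det := by
    rw [← hA'eq, ← RingHom.mapMatrix_apply, ← RingHom.map_det]
    exact ((Matrix.isUnit_iff_isUnit_det _).mp hZ').map _
  have h1 : A * cayley Z = B := by
    have hcomm : A * B = B * A := by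
      simp only [hA, hB, mul_add, add_mul, mul_sub, sub_mul, Matrix.mul_smul, Matrix.smul_mul,
        mul_one, one_mul]
      abel
    rw [cayley, ← hc, ← hB, ← hA, ← mul_assoc, hcomm,
      Matrix.mul_nonsing_inv_cancel_right _ _ hAdet]
  have h2 : (cayley Z').map (starRingEnd ℂ) * A' = W + c • 1 := by
    rw [← hB'eq, ← hA'eq, cayley, ← hc, ← Matrix.map_mul,
      Matrix.nonsing_inv_mul_cancel_right _ _ ((Matrix.isUnit_iff_isUnit_det _).mp hZ')]
  have key : A * ((1 : Matrix (Fin n) (Fin n) ℂ) - cayley Z * (cayley Z').map (starRingEnd ℂ)) * A'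
      = (-(2 * c)) • (Z - W) := by
    have hstep : A * ((1 : Matrix (Fin n) (Fin n) ℂ)
          - cayley Z * (cayley Z').map (starRingEnd ℂ)) * A'
        = A * A' - (A * cayley Z) * ((cayley Z').map (starRingEnd ℂ) * A') := by
      noncomm_ring
    rw [hstep, h1, h2, hA, hB, hA']
    simp only [mul_add, add_mul, mul_sub, sub_mul, Matrix.mul_smul, Matrix.smul_mul,
      mul_one, one_mul, smul_smul, smul_sub, smul_add]
    module
  have hdetkey := congrArg Matrix.det key
  rw [Matrix.det_mul, Matrix.det_mul, Matrix.det_smul, Fintype.card_fin] at hdetkey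
  have h2conj : (starRingEnd ℂ) (2:ℂ) = 2 := map_ofNat _ 2
  have hcc : (starRingEnd ℂ) ((2 * c)⁻¹) = (-(2 * c))⁻¹ := by
    rw [map_inv₀, _root_.map_mul, h2conj, hc, Complex.conj_I]
    congr 1
    ring
  have hconj : (starRingEnd ℂ) (((2 * c)⁻¹ • (Z' + c • 1)).det) = (-(2 * c))⁻¹ ^ n * A'.det := by
    rw [RingHom.map_det, RingHom.mapMatrix_apply]
    have hm : ((2 * c)⁻¹ • (Z' + c • 1)).map (starRingEnd ℂ)
        = (-(2 * c))⁻¹ • ((Z' + c • 1).map (starRingEnd ℂ)) := by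
      ext i j
      simp only [Matrix.map_apply, Matrix.smul_apply, smul_eq_mul, _root_.map_mul, hcc]
    rw [hm, hA'eq, Matrix.det_smul, Fintype.card_fin]
  have h2c : (2 * c) ≠ 0 := by simp [hc, Complex.I_ne_zero]
  have h2c' : (-(2 * c)) ≠ 0 := neg_ne_zero.mpr h2c
  have hAd : A.det ≠ 0 := hAdet.ne_zero
  have hA'd : A'.det ≠ 0 := hA'det.ne_zero
  have hL : ((1 : Matrix (Fin n) (Fin n) ℂ) - cayley Z * (cayley Z').map (starRingEnd ℂ)).det
      = (-(2 * c)) ^ n * (Z - W).det / (A.det * A'.det) := by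
    field_simp
    linear_combination hdetkey
  rw [hconj, hL]
  simp only [Matrix.det_smul, Fintype.card_fin]
  rw [inv_pow, inv_pow, div_eq_div_iff (mul_ne_zero hAd hA'd)
    (mul_ne_zero (mul_ne_zero (inv_ne_zero (pow_ne_zero n h2c)) hAd)
      (mul_ne_zero (inv_ne_zero (pow_ne_zero n h2c')) hA'd))]
  field_simp
end
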